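/- arXiv:1811.02995 — 3 statements merged into one kernel-verified Lean document; each statement's English description precedes it below -/
import Mathlib

section
/- Let Γ be a digraph having neither sinks nor sources. Then the automorphism group of the partial line graph Pl(Γ) (whose vertices are the arcs of Γ, with an arc from (x,y) to (w,z) whenever y = w) is isomorphic to the automorphism group of Γ. -/
variable {V : Type*}

/-- The automorphism group of a digraph given by its arc relation `E`. -/
def autGroup (E : V → V → Prop) : Subgroup (Equiv.Perm V) where
  carrier := {g | ∀ u v : V, E u v ↔ E (g u) (g v)}
  one_mem' := by intro u v; simp
  mul_mem' := by
    intro a b ha hb u v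
    simpa [Equiv.Perm.mul_apply] using (hb u v).trans (ha (b u) (b v))
  inv_mem' := by
    intro a ha u v
    simpa using (ha (a⁻¹ u) (a⁻¹ v)).symm

/-- Connectedness of a digraph (in the underlying undirected sense). -/
def DConnected (E : V → V → Prop) : Prop :=
  ∀ u v : V, Relation.ReflTransGen (fun a b => E a b ∨ E b a) u v

/-- `f : Fin (k+1) → V` is a `k`-arc. -/
def IsKArc (E : V → V → Prop) (k : ℕ) (f : Fin (k + 1) → V) : Prop :=
  ∀ i : Fin k, E (f i.castSucc) (f i.succ)

def KArcTransitive (E : V → V → Prop) (k : ℕ) : Prop :=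
  ∀ f g : Fin (k + 1) → V, IsKArc E k f → IsKArc E k g →
    ∃ a ∈ autGroup E, ∀ i, (a : Equiv.Perm V) (f i) = g i

def HighlyArcTransitive (E : V → V → Prop) : Prop :=
  ∀ k : ℕ, KArcTransitive E k

def VertexTransitive (E : V → V → Prop) : Prop :=
  ∀ u v : V, ∃ a ∈ autGroup E, (a : Equiv.Perm V) u = v

def ArcTransitive (E : V → V → Prop) : Prop :=
  ∀ u v x y : V, E u v → E x y →
    ∃ a ∈ autGroup E, (a : Equiv.Perm V) u = x ∧ (a : Equiv.Perm V) v = y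

/-- Reachability in the underlying undirected graph avoiding the vertex set `S`. -/
def ReachAvoid (E : V → V → Prop) (S : Set V) : V → V → Prop :=
  Relation.ReflTransGen (fun a b => (E a b ∨ E b a) ∧ a ∉ S ∧ b ∉ S)

/-- `u` lies in an infinite component of the complement of `S`. -/
def InfComp (E : V → V → Prop) (S : Set V) (u : V) : Prop :=
  u ∉ S ∧ {w | ReachAvoid E S u w}.Infinite

/-- A connected digraph with exactly two ends. -/
def TwoEnded (E : V → V → Prop) : Prop :=
  DConnected E ∧
  (∀ S : Set V, S.Finite → ∀ u v w : V, InfComp E S u → InfComp E S v → InfComp E S w →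
    ReachAvoid E S u v ∨ ReachAvoid E S u w ∨ ReachAvoid E S v w) ∧
  ∃ S : Set V, S.Finite ∧ ∃ u v : V, InfComp E S u ∧ InfComp E S v ∧ ¬ ReachAvoid E S u v

/-- The stabilizer of a vertex `v` in the automorphism group. -/
def vStab (E : V → V → Prop) (v : V) : Subgroup (autGroup E) where
  carrier := {g | (g : Equiv.Perm V) v = v}
  one_mem' := rfl
  mul_mem' := by
    intro a b ha hb
    simp only [Set.mem_setOf_eq] at *
    simp [Subgroup.coe_mul, Equiv.Perm.mul_apply, ha, hb]
  inv_mem' := by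
    intro a ha
    simp only [Set.mem_setOf_eq] at *
    have := congrArg (((a : Equiv.Perm V))⁻¹ : Equiv.Perm V) ha
    simpa using this.symm

def outSet (E : V → V → Prop) (v : V) : Set V := {u | E v u}
def inSet (E : V → V → Prop) (v : V) : Set V := {u | E u v}

/-- The stabilizer of `v` acts quasi-primitively on the set `Ω`. -/
def QuasiPrimitivelyOn (E : V → V → Prop) (v : V) (Ω : Set V) : Prop :=
  (∀ u ∈ Ω, ∀ w ∈ Ω, ∃ g ∈ vStab E v, ((g : autGroup E) : Equiv.Perm V) u = w) ∧
  (∀ N : Subgroup (vStab E v), N.Normal →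
    (∀ n ∈ N, ∀ u ∈ Ω, (((n : vStab E v) : autGroup E) : Equiv.Perm V) u = u) ∨
    (∀ u ∈ Ω, ∀ w ∈ Ω, ∃ n ∈ N, (((n : vStab E v) : autGroup E) : Equiv.Perm V) u = w))
universe u v

/-- A bundled digraph. -/
structure Digr : Type (u + 1) where
  V : Type u
  E : V → V → Prop

/-- The type of arcs of a digraph. -/
def Digr.Arc (D : Digr) : Type _ := {p : D.V × D.V // D.E p.1 p.2}

/-- The partial line graph: vertices are the arcs, with an arc from `(x,y)` to `(w,z)` iff `y = w`. -/
def Pl (D : Digr) : Digr := ⟨D.Arc, fun a b => a.1.2 = b.1.1⟩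

/-- The `r`-fold iterated partial line graph. -/
def PlIter : ℕ → Digr → Digr
  | 0, D => D
  | r + 1, D => Pl (PlIter r D)

/-- The digraph `Δ_p` on `ℤ × ZMod p` with all arcs `((i,x),(i+1,y))`. -/
def Delta (p : ℕ) : Digr := ⟨ℤ × ZMod p, fun a b => b.1 = a.1 + 1⟩

/-- Two arcs are related if they share an initial vertex or a terminal vertex;
the alternet relation is the equivalence relation generated by this. -/
def altRel (D : Digr) : D.Arc → D.Arc → Prop :=
  Relation.EqvGen (fun a b => a.1.1 = b.1.1 ∨ a.1.2 = b.1.2)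

def altSetoid (D : Digr) : Setoid D.Arc :=
  ⟨altRel D, Relation.EqvGen.is_equivalence _⟩

/-- The digraph of alternets: vertices are alternets, with an arc `(A, B)` whenever
a sink of `A` (a terminal vertex of an arc of `A`) is a source of `B`
(an initial vertex of an arc of `B`). -/
def Al (D : Digr) : Digr :=
  ⟨Quotient (altSetoid D),
    fun A B => ∃ a b : D.Arc, Quotient.mk (altSetoid D) a = A ∧
      Quotient.mk (altSetoid D) b = B ∧ a.1.2 = b.1.1⟩

/-- Isomorphism of digraphs. -/
def DigrIso (D₁ : Digr.{u}) (D₂ : Digr.{v}) : Prop :=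
  ∃ e : D₁.V ≃ D₂.V, ∀ u v : D₁.V, D₁.E u v ↔ D₂.E (e u) (e v)


variable {W : Type u} {E : W → W → Prop}

private def toPl (g : Equiv.Perm W) (hg : ∀ u v, E u v ↔ E (g u) (g v)) :
    Equiv.Perm (Pl (Digr.mk W E)).V where
  toFun a := ⟨(g a.1.1, g a.1.2), (hg _ _).mp a.2⟩
  invFun a := ⟨(g⁻¹ a.1.1, g⁻¹ a.1.2), by
    have h := hg (g⁻¹ a.1.1) (g⁻¹ a.1.2)
    simp only [Equiv.Perm.coe_inv, Equiv.apply_symm_apply] at h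
    exact h.mpr a.2⟩
  left_inv a := by
    apply Subtype.ext
    simp
  right_inv a := by
    apply Subtype.ext
    simp

private def natMap (E : W → W → Prop) :
    ↥(autGroup E) →* ↥(autGroup (Pl (Digr.mk W E)).E) where
  toFun g := ⟨toPl (g : Equiv.Perm W) g.2, by
    intro a b
    show a.1.2 = b.1.1 ↔ (g : Equiv.Perm W) a.1.2 = (g : Equiv.Perm W) b.1.1
    exact (Equiv.apply_eq_iff_eq _).symm⟩
  map_one' := rfl
  map_mul' g h := rfl

/-- a chosen arc with head `v` -/
private noncomputable def arcInto (hsource : ∀ v : W, ∃ u : W, E u v) (v : W) :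
    (Pl (Digr.mk W E)).V :=
  ⟨(Classical.choose (hsource v), v), Classical.choose_spec (hsource v)⟩

/-- arcs with the same head are sent to arcs with the same head -/
private theorem samehead (hsink : ∀ v : W, ∃ u : W, E v u)
    (f : Equiv.Perm (Pl (Digr.mk W E)).V)
    (hf : f ∈ autGroup (Pl (Digr.mk W E)).E)
    {a b : (Pl (Digr.mk W E)).V} (h : a.1.2 = b.1.2) :
    (f a).1.2 = (f b).1.2 := by
  obtain ⟨u, hu⟩ := hsink a.1.2
  set c : (Pl (Digr.mk W E)).V := ⟨(a.1.2, u), hu⟩ with hc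
  have h1 : (f a).1.2 = (f c).1.1 := (hf a c).mp rfl
  have h2 : (f b).1.2 = (f c).1.1 := (hf b c).mp h.symm
  rw [h1, h2]

private noncomputable def gOf (hsource : ∀ v : W, ∃ u : W, E u v)
    (f : Equiv.Perm (Pl (Digr.mk W E)).V) (v : W) : W :=
  (f (arcInto hsource v)).1.2

private theorem gOf_eq (hsink : ∀ v : W, ∃ u : W, E v u)
    (hsource : ∀ v : W, ∃ u : W, E u v)
    (f : Equiv.Perm (Pl (Digr.mk W E)).V)
    (hf : f ∈ autGroup (Pl (Digr.mk W E)).E) {v : W} {a : (Pl (Digr.mk W E)).V}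
    (ha : a.1.2 = v) : gOf hsource f v = (f a).1.2 :=
  samehead hsink f hf (ha ▸ rfl)

private theorem gOf_inv (hsink : ∀ v : W, ∃ u : W, E v u)
    (hsource : ∀ v : W, ∃ u : W, E u v)
    (f : Equiv.Perm (Pl (Digr.mk W E)).V)
    (hf : f ∈ autGroup (Pl (Digr.mk W E)).E) (v : W) :
    gOf hsource f⁻¹ (gOf hsource f v) = v := by
  have hf' : f⁻¹ ∈ autGroup (Pl (Digr.mk W E)).E := (autGroup _).inv_mem hf
  have h : gOf hsource f⁻¹ (gOf hsource f v) = (f⁻¹ (f (arcInto hsource v))).1.2 :=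
    gOf_eq hsink hsource f⁻¹ hf' rfl
  rw [h, Equiv.Perm.coe_inv, Equiv.symm_apply_apply]
  rfl

private theorem gOf_edge (hsink : ∀ v : W, ∃ u : W, E v u)
    (hsource : ∀ v : W, ∃ u : W, E u v)
    (f : Equiv.Perm (Pl (Digr.mk W E)).V)
    (hf : f ∈ autGroup (Pl (Digr.mk W E)).E) {u v : W} (h : E u v) :
    E (gOf hsource f u) (gOf hsource f v) := by
  set a : (Pl (Digr.mk W E)).V := ⟨(u, v), h⟩ with ha
  have h1 : gOf hsource f u = (f a).1.1 := (hf (arcInto hsource u) a).mp rfl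
  have h2 : gOf hsource f v = (f a).1.2 := gOf_eq hsink hsource f hf rfl
  rw [h1, h2]
  exact (f a).2


/-- If a digraph `Γ` has neither sinks nor sources, then the automorphism
group of its partial line graph `Pl(Γ)` is isomorphic to the automorphism group of `Γ`. -/
theorem aut_partial_line_graph_iso {V : Type u} (E : V → V → Prop)
    (hnosink : ∀ v : V, ∃ u : V, E v u)
    (hnosource : ∀ v : V, ∃ u : V, E u v) :
    Nonempty (↥(autGroup (Pl (Digr.mk V E)).E) ≃* ↥(autGroup E)) := by
  refine ⟨(MulEquiv.ofBijective (natMap E) ⟨?_, ?_⟩).symm⟩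
  · intro g h hgh
    apply Subtype.ext
    apply Equiv.ext
    intro v
    obtain ⟨u, hu⟩ := hnosink v
    have := congrArg (fun z => ((z : Equiv.Perm (Pl (Digr.mk V E)).V) ⟨(v, u), hu⟩).1.1)
      (Subtype.ext_iff.mp hgh)
    exact this
  · intro ψ
    set f : Equiv.Perm (Pl (Digr.mk V E)).V := (ψ : Equiv.Perm (Pl (Digr.mk V E)).V) with hfdef
    have hf : f ∈ autGroup (Pl (Digr.mk V E)).E := ψ.2
    have hf' : f⁻¹ ∈ autGroup (Pl (Digr.mk V E)).E := (autGroup _).inv_mem hf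
    set g : Equiv.Perm V :=
      ⟨gOf hnosource f, gOf hnosource f⁻¹,
        gOf_inv hnosink hnosource f hf,
        by intro x; simpa using gOf_inv hnosink hnosource f⁻¹ hf' x⟩ with hg
    have hmem : g ∈ autGroup E := by
      intro u v
      constructor
      · exact gOf_edge hnosink hnosource f hf
      · intro h
        have := gOf_edge hnosink hnosource f⁻¹ hf' h
        change E (gOf hnosource f⁻¹ (gOf hnosource f u))
          (gOf hnosource f⁻¹ (gOf hnosource f v)) at this
        rwa [show gOf hnosource f⁻¹ (gOf hnosource f u) = u from
              gOf_inv hnosink hnosource f hf u,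
             show gOf hnosource f⁻¹ (gOf hnosource f v) = v from
              gOf_inv hnosink hnosource f hf v] at this
    refine ⟨⟨g, hmem⟩, ?_⟩
    apply Subtype.ext
    apply Equiv.ext
    intro a
    apply Subtype.ext
    have h1 : g a.1.1 = (f a).1.1 := (hf (arcInto hnosource a.1.1) a).mp rfl
    have h2 : g a.1.2 = (f a).1.2 := gOf_eq hnosink hnosource f hf rfl
    show (g a.1.1, g a.1.2) = (f a).1
    rw [h1, h2]
end

section
/- Let Γ be a connected vertex-transitive digraph with Property Z, witnessed by a surjective digraph homomorphism φ: Γ → Z⃗ with fibres Γ_i = φ⁻¹(i). If the pointwise stabilizer G_{(Γ_0)} of Γ_0 in G = Aut(Γ) acts transitively on out(v) for some vertex v ∈ Γ_0, then Γ is k-arc-transitive for every k ≥ 1 (i.e., highly-arc-transitive). -/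
variable {V : Type*}

theorem Equiv.Perm.apply_inv_self {α : Type*} (f : Equiv.Perm α) (x : α) : f (f⁻¹ x) = x :=
  f.apply_symm_apply x

lemma mem_autGroup' {E : V → V → Prop} {g : Equiv.Perm V} :
    g ∈ autGroup E ↔ ∀ u v : V, E u v ↔ E (g u) (g v) := Iff.rfl

/-- Every automorphism shifts `φ` by a constant. -/
lemma shift_const' {E : V → V → Prop} (hconn : DConnected E) {φ : V → ℤ}
    (hhom : ∀ u v : V, E u v → φ v = φ u + 1) {g : Equiv.Perm V}
    (hg : g ∈ autGroup E) (x y : V) :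
    φ (g x) - φ x = φ (g y) - φ y := by
  have h := hconn x y
  induction h with
  | refl => rfl
  | @tail b c hab hbc ih =>
    rcases hbc with h | h
    · have h1 := hhom _ _ h
      have h2 := hhom _ _ ((hg b c).mp h)
      omega
    · have h1 := hhom _ _ h
      have h2 := hhom _ _ ((hg c b).mp h)
      omega

/-- Splice a level-preserving automorphism fixing level 0 pointwise with the identity
below level 0. -/
lemma splice' {E : V → V → Prop} {φ : V → ℤ}
    (hhom : ∀ u v : V, E u v → φ v = φ u + 1)
    (g : Equiv.Perm V) (hg : g ∈ autGroup E)
    (hfix : ∀ x, φ x = 0 → g x = x) (hlevel : ∀ x, φ (g x) = φ x) :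
    ∃ g' : Equiv.Perm V, g' ∈ autGroup E ∧ (∀ x, φ x ≤ 0 → g' x = x) ∧
      (∀ x, 0 < φ x → g' x = g x) := by
  have hlevinv : ∀ x, φ (g⁻¹ x) = φ x := by
    intro x
    conv_rhs => rw [← Equiv.Perm.apply_inv_self g x, hlevel]
  refine ⟨⟨fun x => if 0 < φ x then g x else x, fun x => if 0 < φ x then g⁻¹ x else x,
      ?_, ?_⟩, ?_, ?_, ?_⟩
  · intro x
    by_cases h : 0 < φ x <;> simp [h, hlevel]
  · intro x
    by_cases h : 0 < φ x <;> simp [h, show ∀ y, φ (g.symm y) = φ y from hlevinv]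
  · intro u w
    simp only [Equiv.coe_fn_mk]
    by_cases hu : 0 < φ u <;> by_cases hw : 0 < φ w
    · simp only [if_pos hu, if_pos hw]; exact hg u w
    · simp only [if_pos hu, if_neg hw]
      constructor
      · intro h; have := hhom _ _ h; omega
      · intro h; have := hhom _ _ h; rw [hlevel] at this; omega
    · simp only [if_neg hu, if_pos hw]
      by_cases hw1 : φ w = φ u + 1
      · have hu0 : φ u = 0 := by omega
        have : g u = u := hfix u hu0
        rw [show E u (g w) ↔ E (g u) (g w) by rw [this]]
        exact hg u w
      · constructor
        · intro h; exact absurd (hhom _ _ h) hw1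
        · intro h; have := hhom _ _ h; rw [hlevel] at this; exact absurd this hw1
    · simp only [if_neg hu, if_neg hw]
  · intro x hx
    simp only [Equiv.coe_fn_mk, if_neg (by omega : ¬ 0 < φ x)]
  · intro x hx
    simp only [Equiv.coe_fn_mk, if_pos hx]

/-- Key lemma: for any vertex `p` and `u, w ∈ out(p)` there is an automorphism fixing
all levels `≤ φ p` pointwise and mapping `u` to `w`. -/
lemma key_lemma' {E : V → V → Prop} (hconn : DConnected E) (hvt : VertexTransitive E)
    {φ : V → ℤ} (hhom : ∀ u v : V, E u v → φ v = φ u + 1)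
    (htrans : ∃ v : V, φ v = 0 ∧ ∀ u w : V, E v u → E v w →
      ∃ g : Equiv.Perm V, g ∈ autGroup E ∧ (∀ x : V, φ x = 0 → g x = x) ∧ g u = w)
    (p u w : V) (hpu : E p u) (hpw : E p w) :
    ∃ h : Equiv.Perm V, h ∈ autGroup E ∧ (∀ x, φ x ≤ φ p → h x = x) ∧ h u = w := by
  obtain ⟨v, hv0, hout⟩ := htrans
  obtain ⟨a, ha, hav⟩ := hvt v p
  -- shift of a is φ p
  have hashift : ∀ x, φ (a x) = φ x + φ p := by
    intro x
    have := shift_const' hconn hhom ha x v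
    rw [hav, hv0] at this; omega
  have hainv : ∀ x, φ (a⁻¹ x) = φ x - φ p := by
    intro x
    have := hashift (a⁻¹ x)
    rw [Equiv.Perm.apply_inv_self] at this; omega
  have hu' : E v (a⁻¹ u) := by
    have := (ha v (a⁻¹ u)).mpr
    apply this
    rw [hav, Equiv.Perm.apply_inv_self]; exact hpu
  have hw' : E v (a⁻¹ w) := by
    have := (ha v (a⁻¹ w)).mpr
    apply this
    rw [hav, Equiv.Perm.apply_inv_self]; exact hpw
  obtain ⟨g, hgA, hgfix, hguw⟩ := hout _ _ hu' hw'
  have hglevel : ∀ x, φ (g x) = φ x := by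
    intro x
    have := shift_const' hconn hhom hgA x v
    rw [hgfix v hv0] at this; omega
  obtain ⟨g', hg'A, hg'fix, hg'eq⟩ := splice' hhom g hgA hgfix hglevel
  refine ⟨a * g' * a⁻¹, ?_, ?_, ?_⟩
  · exact (autGroup E).mul_mem ((autGroup E).mul_mem ha hg'A) ((autGroup E).inv_mem ha)
  · intro x hx
    have h1 : φ (a⁻¹ x) ≤ 0 := by rw [hainv]; omega
    simp only [Equiv.Perm.mul_apply]
    rw [hg'fix _ h1, Equiv.Perm.apply_inv_self]
  · have hlev : 0 < φ (a⁻¹ u) := by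
      have := hhom _ _ hu'
      rw [hv0] at this; omega
    simp only [Equiv.Perm.mul_apply]
    rw [hg'eq _ hlev, hguw, Equiv.Perm.apply_inv_self]

/-- A connected vertex-transitive digraph with Property Z, such that the
pointwise stabilizer of the fibre `Γ₀` acts transitively on `out(v)` for some `v ∈ Γ₀`,
is `k`-arc-transitive for every `k ≥ 1`, i.e. highly-arc-transitive. -/
theorem highly_arc_transitive_of_fibre_stabilizer_out_transitive
    {V : Type*} (E : V → V → Prop)
    (hconn : DConnected E) (hvt : VertexTransitive E)
    (φ : V → ℤ) (hsurj : Function.Surjective φ)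
    (hhom : ∀ u v : V, E u v → φ v = φ u + 1)
    (htrans : ∃ v : V, φ v = 0 ∧ ∀ u w : V, E v u → E v w →
      ∃ g : Equiv.Perm V, g ∈ autGroup E ∧ (∀ x : V, φ x = 0 → g x = x) ∧ g u = w) :
    ∀ k : ℕ, 1 ≤ k → KArcTransitive E k := by
  intro k _
  intro f₁ f₂ hf₁ hf₂
  -- level lemma for arcs
  have hlev : ∀ (f : Fin (k+1) → V), IsKArc E k f → ∀ i : Fin (k+1),
      φ (f i) = φ (f 0) + (i : ℕ) := by
    intro f hf i
    induction i using Fin.induction with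
    | zero => simp
    | succ i ih =>
      have := hhom _ _ (hf i)
      rw [this, ih]
      push_cast [Fin.val_succ, Fin.coe_castSucc]
      ring
  -- main induction
  have main : ∀ j : ℕ, j ≤ k → ∃ a : Equiv.Perm V, a ∈ autGroup E ∧
      ∀ i : Fin (k+1), (i : ℕ) ≤ j → a (f₁ i) = f₂ i := by
    intro j
    induction j with
    | zero =>
      intro _
      obtain ⟨a, ha, hav⟩ := hvt (f₁ 0) (f₂ 0)
      refine ⟨a, ha, ?_⟩
      intro i hi
      have : i = 0 := Fin.ext (by simp only [Fin.val_zero]; omega)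
      rw [this]; exact hav
    | succ j ih =>
      intro hj
      obtain ⟨a, ha, hai⟩ := ih (by omega)
      set jf : Fin k := ⟨j, by omega⟩ with hjf
      have hcs : (jf.castSucc : ℕ) = j := rfl
      have hss : (jf.succ : ℕ) = j + 1 := rfl
      have hEf : E (f₂ jf.castSucc) (a (f₁ jf.succ)) := by
        have h1 := (ha _ _).mp (hf₁ jf)
        rw [hai jf.castSucc (by omega)] at h1
        exact h1
      have hEg : E (f₂ jf.castSucc) (f₂ jf.succ) := hf₂ jf
      obtain ⟨h, hhA, hhfix, hhu⟩ := key_lemma' hconn hvt hhom htrans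
        (f₂ jf.castSucc) (a (f₁ jf.succ)) (f₂ jf.succ) hEf hEg
      refine ⟨h * a, (autGroup E).mul_mem hhA ha, ?_⟩
      intro i hi
      simp only [Equiv.Perm.mul_apply]
      by_cases hij : (i : ℕ) ≤ j
      · rw [hai i hij]
        apply hhfix
        rw [hlev f₂ hf₂ i, hlev f₂ hf₂ jf.castSucc, hcs]
        omega
      · have : i = jf.succ := Fin.ext (by omega)
        rw [this, hhu]
  obtain ⟨a, ha, hai⟩ := main k le_rfl
  exact ⟨a, ha, fun i => hai i (by omega)⟩
end

section
/- Let Γ be a connected vertex-transitive digraph with in- and out-valencies both equal to 2. If Γ is not highly-arc-transitive, then there is a number k such that Aut(Γ) acts regularly on the k-arcs of Γ and |G_v| = 2^k for every vertex v. In particular, if vertex stabilizers in Aut(Γ) are infinite, then Γ is highly-arc-transitive. -/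
variable {V : Type*}

theorem Equiv.Perm.inv_apply_self {α : Type*} (f : Equiv.Perm α) (x : α) : f⁻¹ (f x) = x :=
  Equiv.Perm.inv_eq_iff_eq.mpr rfl

namespace ValencyTwoAux

variable {V : Type*} {E : V → V → Prop}



lemma isKArc_iff' {k : ℕ} {f : Fin (k+1) → V} :
    IsKArc E k f ↔ ∀ i : ℕ, ∀ h : i < k, E (f ⟨i, by omega⟩) (f ⟨i+1, by omega⟩) := by
  constructor
  · intro hf i h; exact hf ⟨i, h⟩
  · intro hf i; exact hf i.1 i.2

lemma out_pair (hout : ∀ v : V, (outSet E v).ncard = 2) (v : V) :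
    ∃ x y : V, x ≠ y ∧ ∀ u, E v u ↔ (u = x ∨ u = y) := by
  obtain ⟨x, y, hxy, h⟩ := Set.ncard_eq_two.mp (hout v)
  refine ⟨x, y, hxy, fun u => ?_⟩
  have : E v u ↔ u ∈ outSet E v := Iff.rfl
  rw [this, h]; simp

lemma in_pair (hin : ∀ v : V, (inSet E v).ncard = 2) (v : V) :
    ∃ x y : V, x ≠ y ∧ ∀ u, E u v ↔ (u = x ∨ u = y) := by
  obtain ⟨x, y, hxy, h⟩ := Set.ncard_eq_two.mp (hin v)
  refine ⟨x, y, hxy, fun u => ?_⟩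
  have : E u v ↔ u ∈ inSet E v := Iff.rfl
  rw [this, h]; simp

lemma isKArc_comp {k : ℕ} {f : Fin (k+1) → V} (a : ↥(autGroup E)) (hf : IsKArc E k f) :
    IsKArc E k (fun i => (a : Equiv.Perm V) (f i)) :=
  fun i => (a.2 _ _).mp (hf i)

/-- append a vertex on the right -/
def snocArc {k : ℕ} (f : Fin (k+1) → V) (x : V) : Fin (k+2) → V :=
  fun j => if h : j.1 < k + 1 then f ⟨j.1, h⟩ else x

lemma snocArc_mk_lt {k : ℕ} (f : Fin (k+1) → V) (x : V) {j : ℕ} (hj : j < k+2) (h : j < k+1) :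
    snocArc f x ⟨j, hj⟩ = f ⟨j, h⟩ := dif_pos h

lemma snocArc_mk_last {k : ℕ} (f : Fin (k+1) → V) (x : V) (hj : k+1 < k+2) :
    snocArc f x ⟨k+1, hj⟩ = x := dif_neg (Nat.lt_irrefl _)

lemma isKArc_snoc {k : ℕ} {f : Fin (k+1) → V} {x : V} (hf : IsKArc E k f)
    (hx : E (f (Fin.last k)) x) : IsKArc E (k+1) (snocArc f x) := by
  rw [isKArc_iff'] at hf ⊢
  intro i h
  rcases Nat.lt_or_ge i k with h' | h'
  · rw [snocArc_mk_lt f x _ (by omega), snocArc_mk_lt f x _ (by omega)]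
    exact hf i h'
  · have hik : i = k := by omega
    subst hik
    rw [snocArc_mk_lt f x _ (by omega), snocArc_mk_last f x]
    exact hx

lemma isKArc_init {k : ℕ} {f : Fin (k+2) → V} (hf : IsKArc E (k+1) f) :
    IsKArc E k (fun j : Fin (k+1) => f ⟨j.1, by omega⟩) := by
  rw [isKArc_iff'] at hf ⊢
  intro i h
  exact hf i (by omega)

lemma isKArc_tail {k : ℕ} {f : Fin (k+2) → V} (hf : IsKArc E (k+1) f) :
    IsKArc E k (fun j : Fin (k+1) => f ⟨j.1 + 1, by omega⟩) := by
  rw [isKArc_iff'] at hf ⊢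
  intro i h
  exact hf (i+1) (by omega)

lemma exists_arc_from (hout : ∀ v : V, (outSet E v).ncard = 2) :
    ∀ (k : ℕ) (v : V), ∃ f : Fin (k+1) → V, IsKArc E k f ∧ f 0 = v := by
  intro k
  induction k with
  | zero => exact fun v => ⟨fun _ => v, fun i => i.elim0, rfl⟩
  | succ k ih =>
    intro v
    obtain ⟨f, hf, hf0⟩ := ih v
    obtain ⟨x, y, -, hxy⟩ := out_pair hout (f (Fin.last k))
    refine ⟨snocArc f x, isKArc_snoc hf ((hxy x).mpr (Or.inl rfl)), ?_⟩
    have : (0 : Fin (k+2)) = ⟨0, by omega⟩ := rfl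
    rw [this, snocArc_mk_lt f x _ (by omega)]
    exact hf0



lemma karc_exists {k : ℕ} (h : KArcTransitive E k) {f g : Fin (k+1) → V}
    (hf : IsKArc E k f) (hg : IsKArc E k g) :
    ∃ a : ↥(autGroup E), ∀ i, ((a : ↥(autGroup E)) : Equiv.Perm V) (f i) = g i := by
  obtain ⟨a, ha, hmap⟩ := h f g hf hg
  exact ⟨⟨a, ha⟩, hmap⟩

lemma karc_zero (hvt : VertexTransitive E) : KArcTransitive E 0 := by
  intro f g _ _
  obtain ⟨a, ha, h⟩ := hvt (f 0) (g 0)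
  refine ⟨a, ha, fun i => ?_⟩
  have h0 : i = 0 := Fin.fin_one_eq_zero i
  rw [h0]; exact h

lemma karc_anti (hout : ∀ v : V, (outSet E v).ncard = 2) {k : ℕ}
    (h : KArcTransitive E (k+1)) : KArcTransitive E k := by
  intro f g hf hg
  obtain ⟨x, x', hxne, hx⟩ := out_pair hout (f (Fin.last k))
  obtain ⟨y, y', hyne, hy⟩ := out_pair hout (g (Fin.last k))
  have hxe : E (f (Fin.last k)) x := (hx x).mpr (Or.inl rfl)
  have hye : E (g (Fin.last k)) y := (hy y).mpr (Or.inl rfl)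
  obtain ⟨a, ha, hmap⟩ := h (snocArc f x) (snocArc g y) (isKArc_snoc hf hxe) (isKArc_snoc hg hye)
  refine ⟨a, ha, fun i => ?_⟩
  have := hmap ⟨i.1, by omega⟩
  rw [snocArc_mk_lt f x _ (by omega), snocArc_mk_lt g y _ (by omega)] at this
  exact this

lemma out_eq_or (hout : ∀ v : V, (outSet E v).ncard = 2) {v b c d : V}
    (hb : E v b) (hc : E v c) (hd : E v d) (hbc : b ≠ c) : d = b ∨ d = c := by
  obtain ⟨p, q, hpq, hmem⟩ := out_pair hout v
  rcases (hmem b).mp hb with rfl | rfl <;> rcases (hmem c).mp hc with rfl | rfl <;>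
    rcases (hmem d).mp hd with rfl | rfl <;> tauto

lemma in_eq_or (hin : ∀ v : V, (inSet E v).ncard = 2) {v b c d : V}
    (hb : E b v) (hc : E c v) (hd : E d v) (hbc : b ≠ c) : d = b ∨ d = c := by
  obtain ⟨p, q, hpq, hmem⟩ := in_pair hin v
  rcases (hmem b).mp hb with rfl | rfl <;> rcases (hmem c).mp hc with rfl | rfl <;>
    rcases (hmem d).mp hd with rfl | rfl <;> tauto

lemma out_rigid (hout : ∀ v : V, (outSet E v).ncard = 2) {k : ℕ}
    (hk : KArcTransitive E k) (hk1 : ¬ KArcTransitive E (k+1))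
    {f : Fin (k+1) → V} (hf : IsKArc E k f) (a : ↥(autGroup E))
    (hfix : ∀ i, ((a : ↥(autGroup E)) : Equiv.Perm V) (f i) = f i)
    {x : V} (hx : E (f (Fin.last k)) x) : (a : Equiv.Perm V) x = x := by
  by_contra hax
  apply hk1
  set aP : Equiv.Perm V := (a : Equiv.Perm V) with haP
  have haxnb : E (f (Fin.last k)) (aP x) := by
    have := (a.2 (f (Fin.last k)) x).mp hx
    rwa [hfix (Fin.last k)] at this
  have haaxnb : E (f (Fin.last k)) (aP (aP x)) := by
    have := (a.2 (f (Fin.last k)) (aP x)).mp haxnb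
    rwa [hfix (Fin.last k)] at this
  have haax : aP (aP x) = x := by
    have hne : aP (aP x) ≠ aP x := fun hcon => hax (aP.injective hcon)
    rcases out_eq_or hout hx haxnb haaxnb (Ne.symm hax) with h | h
    · exact h
    · exact absurd h hne
  -- now prove (k+1)-arc-transitivity
  intro F G hF hG
  have hF' : IsKArc E k (fun j : Fin (k+1) => F ⟨j.1, by omega⟩) := isKArc_init hF
  have hG' : IsKArc E k (fun j : Fin (k+1) => G ⟨j.1, by omega⟩) := isKArc_init hG
  obtain ⟨b, hbmap⟩ := karc_exists hk hF' hf
  obtain ⟨c, hcmap⟩ := karc_exists hk hG' hf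
  have hb' : ∀ (i : ℕ) (h : i < k+1), (b : Equiv.Perm V) (F ⟨i, by omega⟩) = f ⟨i, h⟩ :=
    fun i h => hbmap ⟨i, h⟩
  have hc' : ∀ (i : ℕ) (h : i < k+1), (c : Equiv.Perm V) (G ⟨i, by omega⟩) = f ⟨i, h⟩ :=
    fun i h => hcmap ⟨i, h⟩
  have hFlast : E (F ⟨k, by omega⟩) (F ⟨k+1, by omega⟩) := isKArc_iff'.mp hF k (by omega)
  have hGlast : E (G ⟨k, by omega⟩) (G ⟨k+1, by omega⟩) := isKArc_iff'.mp hG k (by omega)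
  set u1 : V := (b : Equiv.Perm V) (F ⟨k+1, by omega⟩) with hu1
  set u2 : V := (c : Equiv.Perm V) (G ⟨k+1, by omega⟩) with hu2
  have hu1nb : E (f (Fin.last k)) u1 := by
    have := (b.2 _ _).mp hFlast
    rwa [hb' k (by omega)] at this
  have hu2nb : E (f (Fin.last k)) u2 := by
    have := (c.2 _ _).mp hGlast
    rwa [hc' k (by omega)] at this
  -- the designated automorphism
  by_cases h12 : u1 = u2
  · refine ⟨(c : Equiv.Perm V)⁻¹ * (b : Equiv.Perm V), ?_, ?_⟩
    · exact mul_mem (inv_mem c.2) b.2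
    · intro j
      rcases Nat.lt_or_ge j.1 (k+1) with hj | hj
      · have e1 : (b : Equiv.Perm V) (F j) = f ⟨j.1, hj⟩ := by
          have := hb' j.1 hj; rwa [Fin.eta] at this
        have e2 : (c : Equiv.Perm V) (G j) = f ⟨j.1, hj⟩ := by
          have := hc' j.1 hj; rwa [Fin.eta] at this
        rw [Equiv.Perm.mul_apply, e1, ← e2, Equiv.Perm.inv_apply_self]
      · have hjv : j = (⟨k+1, Nat.lt_succ_self (k+1)⟩ : Fin (k+1+1)) :=
          Fin.ext (by show j.1 = k+1; have := j.2; omega)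
        rw [hjv, Equiv.Perm.mul_apply, ← hu1, h12, hu2, Equiv.Perm.inv_apply_self]
  · refine ⟨(c : Equiv.Perm V)⁻¹ * (aP * (b : Equiv.Perm V)), ?_, ?_⟩
    · exact mul_mem (inv_mem c.2) (mul_mem a.2 b.2)
    · have hau1 : aP u1 = u2 := by
        rcases out_eq_or hout hx haxnb hu1nb (Ne.symm hax) with h1 | h1 <;>
          rcases out_eq_or hout hx haxnb hu2nb (Ne.symm hax) with h2 | h2
        · exact absurd (h1.trans h2.symm) h12
        · rw [h1, h2]
        · rw [h1, haax, h2]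
        · exact absurd (h1.trans h2.symm) h12
      intro j
      rcases Nat.lt_or_ge j.1 (k+1) with hj | hj
      · have e1 : (b : Equiv.Perm V) (F j) = f ⟨j.1, hj⟩ := by
          have := hb' j.1 hj; rwa [Fin.eta] at this
        have e2 : (c : Equiv.Perm V) (G j) = f ⟨j.1, hj⟩ := by
          have := hc' j.1 hj; rwa [Fin.eta] at this
        have e3 : aP (f ⟨j.1, hj⟩) = f ⟨j.1, hj⟩ := hfix _
        rw [Equiv.Perm.mul_apply, Equiv.Perm.mul_apply, e1, e3, ← e2, Equiv.Perm.inv_apply_self]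
      · have hjv : j = (⟨k+1, Nat.lt_succ_self (k+1)⟩ : Fin (k+1+1)) :=
          Fin.ext (by show j.1 = k+1; have := j.2; omega)
        rw [hjv, Equiv.Perm.mul_apply, Equiv.Perm.mul_apply, ← hu1, hau1, hu2,
          Equiv.Perm.inv_apply_self]


lemma in_rigid (hin : ∀ v : V, (inSet E v).ncard = 2) {k : ℕ}
    (hk : KArcTransitive E k) (hk1 : ¬ KArcTransitive E (k+1))
    {f : Fin (k+1) → V} (hf : IsKArc E k f) (a : ↥(autGroup E))
    (hfix : ∀ i, ((a : ↥(autGroup E)) : Equiv.Perm V) (f i) = f i)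
    {x : V} (hx : E x (f 0)) : (a : Equiv.Perm V) x = x := by
  by_contra hax
  apply hk1
  set aP : Equiv.Perm V := (a : Equiv.Perm V) with haP
  have hf0 : f 0 = f ⟨0, by omega⟩ := rfl
  have haxnb : E (aP x) (f 0) := by
    have := (a.2 x (f 0)).mp hx
    rwa [hfix 0] at this
  have haaxnb : E (aP (aP x)) (f 0) := by
    have := (a.2 (aP x) (f 0)).mp haxnb
    rwa [hfix 0] at this
  have haax : aP (aP x) = x := by
    have hne : aP (aP x) ≠ aP x := fun hcon => hax (aP.injective hcon)
    rcases in_eq_or hin hx haxnb haaxnb (Ne.symm hax) with h | h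
    · exact h
    · exact absurd h hne
  intro F G hF hG
  have hF' : IsKArc E k (fun j : Fin (k+1) => F ⟨j.1 + 1, by omega⟩) := isKArc_tail hF
  have hG' : IsKArc E k (fun j : Fin (k+1) => G ⟨j.1 + 1, by omega⟩) := isKArc_tail hG
  obtain ⟨b, hbmap⟩ := karc_exists hk hF' hf
  obtain ⟨c, hcmap⟩ := karc_exists hk hG' hf
  have hb' : ∀ (i : ℕ) (h : i < k+1), (b : Equiv.Perm V) (F ⟨i+1, by omega⟩) = f ⟨i, h⟩ :=
    fun i h => hbmap ⟨i, h⟩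
  have hc' : ∀ (i : ℕ) (h : i < k+1), (c : Equiv.Perm V) (G ⟨i+1, by omega⟩) = f ⟨i, h⟩ :=
    fun i h => hcmap ⟨i, h⟩
  have hFfirst : E (F ⟨0, by omega⟩) (F ⟨1, by omega⟩) := isKArc_iff'.mp hF 0 (by omega)
  have hGfirst : E (G ⟨0, by omega⟩) (G ⟨1, by omega⟩) := isKArc_iff'.mp hG 0 (by omega)
  set u1 : V := (b : Equiv.Perm V) (F ⟨0, by omega⟩) with hu1
  set u2 : V := (c : Equiv.Perm V) (G ⟨0, by omega⟩) with hu2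
  have hu1nb : E u1 (f 0) := by
    have := (b.2 _ _).mp hFfirst
    rw [hb' 0 (by omega)] at this
    rwa [hf0]
  have hu2nb : E u2 (f 0) := by
    have := (c.2 _ _).mp hGfirst
    rw [hc' 0 (by omega)] at this
    rwa [hf0]
  by_cases h12 : u1 = u2
  · refine ⟨(c : Equiv.Perm V)⁻¹ * (b : Equiv.Perm V), ?_, ?_⟩
    · exact mul_mem (inv_mem c.2) b.2
    · intro j
      rcases Nat.eq_zero_or_pos j.1 with hj | hj
      · have hjv : j = (⟨0, by omega⟩ : Fin (k+1+1)) := Fin.ext hj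
        rw [hjv, Equiv.Perm.mul_apply, ← hu1, h12, hu2, Equiv.Perm.inv_apply_self]
      · have hjlt : j.1 - 1 < k + 1 := by have := j.2; omega
        have hjeq : (⟨j.1 - 1 + 1, by omega⟩ : Fin (k+1+1)) = j :=
          Fin.ext (by show j.1 - 1 + 1 = j.1; omega)
        have e1 : (b : Equiv.Perm V) (F j) = f ⟨j.1 - 1, hjlt⟩ := by
          have := hb' (j.1 - 1) hjlt; rwa [hjeq] at this
        have e2 : (c : Equiv.Perm V) (G j) = f ⟨j.1 - 1, hjlt⟩ := by
          have := hc' (j.1 - 1) hjlt; rwa [hjeq] at this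
        rw [Equiv.Perm.mul_apply, e1, ← e2, Equiv.Perm.inv_apply_self]
  · refine ⟨(c : Equiv.Perm V)⁻¹ * (aP * (b : Equiv.Perm V)), ?_, ?_⟩
    · exact mul_mem (inv_mem c.2) (mul_mem a.2 b.2)
    · have hau1 : aP u1 = u2 := by
        rcases in_eq_or hin hx haxnb hu1nb (Ne.symm hax) with h1 | h1 <;>
          rcases in_eq_or hin hx haxnb hu2nb (Ne.symm hax) with h2 | h2
        · exact absurd (h1.trans h2.symm) h12
        · rw [h1, h2]
        · rw [h1, haax, h2]
        · exact absurd (h1.trans h2.symm) h12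
      intro j
      rcases Nat.eq_zero_or_pos j.1 with hj | hj
      · have hjv : j = (⟨0, by omega⟩ : Fin (k+1+1)) := Fin.ext hj
        rw [hjv, Equiv.Perm.mul_apply, Equiv.Perm.mul_apply, ← hu1, hau1, hu2,
          Equiv.Perm.inv_apply_self]
      · have hjlt : j.1 - 1 < k + 1 := by have := j.2; omega
        have hjeq : (⟨j.1 - 1 + 1, by omega⟩ : Fin (k+1+1)) = j :=
          Fin.ext (by show j.1 - 1 + 1 = j.1; omega)
        have e1 : (b : Equiv.Perm V) (F j) = f ⟨j.1 - 1, hjlt⟩ := by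
          have := hb' (j.1 - 1) hjlt; rwa [hjeq] at this
        have e2 : (c : Equiv.Perm V) (G j) = f ⟨j.1 - 1, hjlt⟩ := by
          have := hc' (j.1 - 1) hjlt; rwa [hjeq] at this
        have e3 : aP (f ⟨j.1 - 1, hjlt⟩) = f ⟨j.1 - 1, hjlt⟩ := hfix _
        rw [Equiv.Perm.mul_apply, Equiv.Perm.mul_apply, e1, e3, ← e2, Equiv.Perm.inv_apply_self]

def shiftF {k : ℕ} (g : Fin (k+1) → V) (x : V) : Fin (k+1) → V :=
  fun j => if h : j.1 + 1 < k + 1 then g ⟨j.1 + 1, h⟩ else x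

lemma shiftF_mk_lt {k : ℕ} (g : Fin (k+1) → V) (x : V) {j : ℕ} (hj : j < k+1)
    (h : j + 1 < k + 1) : shiftF g x ⟨j, hj⟩ = g ⟨j+1, h⟩ := dif_pos h

lemma shiftF_last {k : ℕ} (g : Fin (k+1) → V) (x : V) :
    shiftF g x (Fin.last k) = x := dif_neg (Nat.lt_irrefl _)

def shiftB {k : ℕ} (g : Fin (k+1) → V) (z : V) : Fin (k+1) → V :=
  fun j => if j.1 = 0 then z else g ⟨j.1 - 1, by have := j.2; omega⟩

lemma shiftB_zero {k : ℕ} (g : Fin (k+1) → V) (z : V) :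
    shiftB g z 0 = z := if_pos rfl

lemma shiftB_mk_pos {k : ℕ} (g : Fin (k+1) → V) (z : V) {j : ℕ} (hj : j < k+1)
    (h : j ≠ 0) : shiftB g z ⟨j, hj⟩ = g ⟨j - 1, by omega⟩ := if_neg h

lemma isKArc_shiftF {k : ℕ} {g : Fin (k+1) → V} {x : V} (hg : IsKArc E k g)
    (hx : E (g (Fin.last k)) x) : IsKArc E k (shiftF g x) := by
  rw [isKArc_iff'] at hg ⊢
  intro i h
  rcases Nat.lt_or_ge (i+1) k with h' | h'
  · rw [shiftF_mk_lt g x _ (by omega), shiftF_mk_lt g x _ (by omega)]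
    exact hg (i+1) h'
  · have hik : i + 1 = k := by omega
    rw [shiftF_mk_lt g x _ (by omega)]
    have e2 : shiftF g x (⟨i+1, by omega⟩ : Fin (k+1)) = x :=
      dif_neg (by show ¬ (i+1+1 < k+1); omega)
    have e1 : (⟨i+1, by omega⟩ : Fin (k+1)) = Fin.last k :=
      Fin.ext (by show i+1 = k; omega)
    rw [e2, e1]
    exact hx

lemma isKArc_shiftB {k : ℕ} {g : Fin (k+1) → V} {z : V} (hg : IsKArc E k g)
    (hz : E z (g 0)) : IsKArc E k (shiftB g z) := by
  rw [isKArc_iff'] at hg ⊢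
  intro i h
  rcases Nat.eq_zero_or_pos i with h' | h'
  · subst h'
    have e1 : shiftB g z (⟨0, by omega⟩ : Fin (k+1)) = z := if_pos rfl
    have e2 : shiftB g z (⟨0+1, by omega⟩ : Fin (k+1)) = g ⟨0+1-1, by omega⟩ :=
      shiftB_mk_pos g z _ (by omega)
    rw [e1, e2]
    exact hz
  · rw [shiftB_mk_pos g z _ (by omega), shiftB_mk_pos g z _ (by omega)]
    have h1 : i - 1 < k := by omega
    have := hg (i-1) h1
    have e1 : (⟨i - 1, by omega⟩ : Fin (k+1)) = ⟨i - 1, by omega⟩ := rfl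
    have e2 : (⟨i + 1 - 1, by omega⟩ : Fin (k+1)) = ⟨i - 1 + 1, by omega⟩ :=
      Fin.ext (by show i + 1 - 1 = i - 1 + 1; omega)
    rw [e2]
    exact this

lemma rigid (hconn : DConnected E)
    (hout : ∀ v : V, (outSet E v).ncard = 2) (hin : ∀ v : V, (inSet E v).ncard = 2)
    {k : ℕ} (hk : KArcTransitive E k) (hk1 : ¬ KArcTransitive E (k+1))
    (a : ↥(autGroup E)) {f : Fin (k+1) → V} (hf : IsKArc E k f)
    (hfix : ∀ i, ((a : ↥(autGroup E)) : Equiv.Perm V) (f i) = f i) :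
    ∀ v : V, (a : Equiv.Perm V) v = v := by
  set aP : Equiv.Perm V := (a : Equiv.Perm V) with haP
  set S : (Fin (k+1) → V) → Prop := fun g => IsKArc E k g ∧ ∀ i, aP (g i) = g i with hSdef
  have fwdS : ∀ g, S g → ∀ x, E (g (Fin.last k)) x → S (shiftF g x) := by
    intro g hg x hx
    refine ⟨isKArc_shiftF hg.1 hx, ?_⟩
    intro j
    by_cases h : j.1 + 1 < k + 1
    · have e : shiftF g x j = g ⟨j.1 + 1, h⟩ := dif_pos h
      rw [e]; exact hg.2 _
    · have e : shiftF g x j = x := dif_neg h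
      rw [e]; exact out_rigid hout hk hk1 hg.1 a hg.2 hx
  have bwdS : ∀ g, S g → ∀ z, E z (g 0) → S (shiftB g z) := by
    intro g hg z hz
    refine ⟨isKArc_shiftB hg.1 hz, ?_⟩
    intro j
    by_cases h : j.1 = 0
    · have e : shiftB g z j = z := if_pos h
      rw [e]; exact in_rigid hin hk hk1 hg.1 a hg.2 hz
    · have e : shiftB g z j = g ⟨j.1 - 1, by have := j.2; omega⟩ := if_neg h
      rw [e]; exact hg.2 _
  have to_last : ∀ (n : ℕ) (g : Fin (k+1) → V) (i : Fin (k+1)), S g → k - i.1 ≤ n →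
      ∃ h, S h ∧ h (Fin.last k) = g i := by
    intro n
    induction n with
    | zero =>
      intro g i hg hle
      have : i = Fin.last k := Fin.ext (by show i.1 = k; have := i.2; omega)
      exact ⟨g, hg, by rw [this]⟩
    | succ n ih =>
      intro g i hg hle
      by_cases hik : i.1 = k
      · have : i = Fin.last k := Fin.ext hik
        exact ⟨g, hg, by rw [this]⟩
      · obtain ⟨z, z', hzne, hz⟩ := in_pair hin (g 0)
        have hze : E z (g 0) := (hz z).mpr (Or.inl rfl)
        have hSB := bwdS g hg z hze
        have hipos : i.1 + 1 < k + 1 := by have := i.2; omega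
        have hval : shiftB g z ⟨i.1 + 1, hipos⟩ = g i := by
          have hii : (⟨i.1 + 1 - 1, by have := i.2; omega⟩ : Fin (k+1)) = i :=
            Fin.ext (by show i.1 + 1 - 1 = i.1; omega)
          rw [shiftB_mk_pos g z _ (by omega), hii]
        obtain ⟨h, hSh, hlast⟩ := ih (shiftB g z) ⟨i.1 + 1, hipos⟩ hSB (by show k - (i.1+1) ≤ n; omega)
        exact ⟨h, hSh, by rw [hlast, hval]⟩
  have to_first : ∀ (n : ℕ) (g : Fin (k+1) → V) (i : Fin (k+1)), S g → i.1 ≤ n →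
      ∃ h, S h ∧ h 0 = g i := by
    intro n
    induction n with
    | zero =>
      intro g i hg hle
      have : i = 0 := Fin.ext (by show i.1 = 0; omega)
      exact ⟨g, hg, by rw [this]⟩
    | succ n ih =>
      intro g i hg hle
      by_cases hi0 : i.1 = 0
      · have : i = 0 := Fin.ext hi0
        exact ⟨g, hg, by rw [this]⟩
      · obtain ⟨x, x', hxne, hx⟩ := out_pair hout (g (Fin.last k))
        have hxe : E (g (Fin.last k)) x := (hx x).mpr (Or.inl rfl)
        have hSF := fwdS g hg x hxe
        have hilt : i.1 - 1 < k + 1 := by have := i.2; omega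
        have hval : shiftF g x ⟨i.1 - 1, hilt⟩ = g i := by
          have hii : (⟨i.1 - 1 + 1, by have := i.2; omega⟩ : Fin (k+1)) = i :=
            Fin.ext (by show i.1 - 1 + 1 = i.1; omega)
          rw [shiftF_mk_lt g x _ (by have := i.2; omega), hii]
        obtain ⟨h, hSh, hfirst⟩ := ih (shiftF g x) ⟨i.1 - 1, hilt⟩ hSF (by show i.1 - 1 ≤ n; omega)
        exact ⟨h, hSh, by rw [hfirst, hval]⟩
  have covered_step : ∀ u w : V, (∃ g i, S g ∧ g i = u) → (E u w ∨ E w u) →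
      ∃ g i, S g ∧ g i = w := by
    rintro u w ⟨g, i, hg, rfl⟩ (he | he)
    · obtain ⟨h, hSh, hlast⟩ := to_last k g i hg (by omega)
      refine ⟨shiftF h w, Fin.last k, fwdS h hSh w (by rw [hlast]; exact he), shiftF_last h w⟩
    · obtain ⟨h, hSh, hfirst⟩ := to_first k g i hg (by have := i.2; omega)
      refine ⟨shiftB h w, 0, bwdS h hSh w (by rw [hfirst]; exact he), shiftB_zero h w⟩
  have hcov : ∀ v : V, ∃ g i, S g ∧ g i = v := by
    intro v
    have hrel := hconn (f 0) v
    induction hrel with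
    | refl => exact ⟨f, 0, ⟨hf, hfix⟩, rfl⟩
    | tail hab hbc ih => exact covered_step _ _ ih hbc
  intro v
  obtain ⟨g, i, hg, rfl⟩ := hcov v
  exact hg.2 i

lemma card_arcsFrom (hout : ∀ v : V, (outSet E v).ncard = 2) :
    ∀ (k : ℕ) (v : V), Nat.card {f : Fin (k+1) → V // IsKArc E k f ∧ f 0 = v} = 2 ^ k := by
  classical
  obtain ⟨X, Y, hXY⟩ : ∃ X Y : V → V, ∀ v, X v ≠ Y v ∧ ∀ u, E v u ↔ u = X v ∨ u = Y v := by
    choose X Y h1 h2 using out_pair hout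
    exact ⟨X, Y, fun v => ⟨h1 v, h2 v⟩⟩
  intro k
  induction k with
  | zero =>
    intro v
    haveI : Unique {f : Fin 1 → V // IsKArc E 0 f ∧ f 0 = v} := by
      refine ⟨⟨⟨fun _ => v, fun i => i.elim0, rfl⟩⟩, ?_⟩
      rintro ⟨f, hf, hf0⟩
      apply Subtype.ext
      funext i
      have hi : i = 0 := Fin.fin_one_eq_zero i
      rw [hi]
      exact hf0
    rw [Nat.card_unique, pow_zero]
  | succ k ih =>
    intro v
    -- helper equalities about snocArc
    have hsnoc_restrict : ∀ (g : Fin (k+1) → V) (x : V) (j : Fin (k+1)),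
        snocArc g x ⟨j.1, by have := j.2; omega⟩ = g j := by
      intro g x j
      rw [snocArc_mk_lt g x _ j.2]
    have hsnoc_k : ∀ (g : Fin (k+1) → V) (x : V),
        snocArc g x ⟨k, by omega⟩ = g (Fin.last k) := by
      intro g x
      rw [snocArc_mk_lt g x _ (by omega)]
      rfl
    have hsnoc_top : ∀ (g : Fin (k+1) → V) (x : V),
        snocArc g x ⟨k+1, by omega⟩ = x := fun g x => snocArc_mk_last g x _
    have hrecover : ∀ (F : Fin (k+2) → V) (x : V), x = F ⟨k+1, by omega⟩ →
        snocArc (fun j : Fin (k+1) => F ⟨j.1, by have := j.2; omega⟩) x = F := by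
      intro F x hx
      funext j
      rcases Nat.lt_or_ge j.1 (k+1) with hj | hj
      · have hje : j = (⟨j.1, j.2⟩ : Fin (k+2)) := rfl
        rw [hje, snocArc_mk_lt _ _ _ hj]
      · have hje : j = (⟨k+1, by omega⟩ : Fin (k+2)) :=
          Fin.ext (by show j.1 = k+1; have := j.2; omega)
        rw [hje, snocArc_mk_last, hx]
    have e : {f : Fin (k+2) → V // IsKArc E (k+1) f ∧ f 0 = v} ≃
        {g : Fin (k+1) → V // IsKArc E k g ∧ g 0 = v} × Bool :=
      { toFun := fun F =>
          (⟨fun j : Fin (k+1) => F.1 ⟨j.1, by have := j.2; omega⟩, isKArc_init F.2.1, F.2.2⟩,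
            if F.1 ⟨k+1, by omega⟩ = X (F.1 ⟨k, by omega⟩) then true else false)
        invFun := fun p =>
          ⟨snocArc p.1.1 (if p.2 then X (p.1.1 (Fin.last k)) else Y (p.1.1 (Fin.last k))),
            by
              refine isKArc_snoc p.1.2.1 ?_
              by_cases hb : p.2
              · rw [if_pos hb]
                exact ((hXY _).2 _).mpr (Or.inl rfl)
              · rw [if_neg hb]
                exact ((hXY _).2 _).mpr (Or.inr rfl)
            , by
              have h0 : (0 : Fin (k+2)) = ⟨0, by omega⟩ := rfl
              rw [h0, snocArc_mk_lt _ _ _ (by omega)]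
              exact p.1.2.2⟩
        left_inv := by
          rintro ⟨F, hF, hF0⟩
          apply Subtype.ext
          dsimp only
          refine hrecover F _ ?_
          have hnb : E (F ⟨k, by omega⟩) (F ⟨k+1, by omega⟩) := isKArc_iff'.mp hF k (by omega)
          by_cases hc : F ⟨k+1, by omega⟩ = X (F ⟨k, by omega⟩)
          · simp only [if_pos hc, if_pos rfl]
            exact hc.symm
          · simp only [if_neg hc, if_neg Bool.false_ne_true]
            rcases ((hXY _).2 _).mp hnb with h | h
            · exact absurd h hc
            · exact h.symm
        right_inv := by
          rintro ⟨⟨g, hg, hg0⟩, b⟩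
          dsimp only
          refine Prod.ext ?_ ?_
          · apply Subtype.ext
            dsimp only
            funext j
            exact hsnoc_restrict g _ j
          · dsimp only
            simp only [hsnoc_top, hsnoc_k]
            rcases b with _ | _
            · rw [if_neg Bool.false_ne_true,
                if_neg (fun h => (hXY (g (Fin.last k))).1 h.symm)]
            · rw [if_pos rfl, if_pos rfl] }
    rw [Nat.card_congr e, Nat.card_prod, ih v, Nat.card_eq_fintype_card]
    simp [pow_succ]

lemma stab_card_eq (hconn : DConnected E)
    (hout : ∀ v : V, (outSet E v).ncard = 2) (hin : ∀ v : V, (inSet E v).ncard = 2)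
    {k : ℕ} (hk : KArcTransitive E k) (hk1 : ¬ KArcTransitive E (k+1)) (v : V) :
    Nat.card ↥(vStab E v) = Nat.card {f : Fin (k+1) → V // IsKArc E k f ∧ f 0 = v} := by
  obtain ⟨f0, hf0, hf00⟩ := exists_arc_from hout k v
  refine Nat.card_eq_of_bijective
    (fun g => ⟨fun i => ((g : ↥(autGroup E)) : Equiv.Perm V) (f0 i),
      isKArc_comp _ hf0, by
        show ((g : ↥(autGroup E)) : Equiv.Perm V) (f0 0) = v
        rw [hf00]; exact g.2⟩) ⟨?_, ?_⟩
  · intro g1 g2 hgg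
    have hpt : ∀ i, ((g1 : ↥(autGroup E)) : Equiv.Perm V) (f0 i)
        = ((g2 : ↥(autGroup E)) : Equiv.Perm V) (f0 i) :=
      fun i => congrFun (congrArg Subtype.val hgg) i
    set d : ↥(autGroup E) := (g2 : ↥(autGroup E))⁻¹ * (g1 : ↥(autGroup E)) with hd
    have hfixd : ∀ i, (d : Equiv.Perm V) (f0 i) = f0 i := by
      intro i
      rw [hd]
      simp only [Subgroup.coe_mul, Subgroup.coe_inv, Equiv.Perm.mul_apply]
      rw [hpt i, Equiv.Perm.inv_apply_self]
    have hid := rigid hconn hout hin hk hk1 d hf0 hfixd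
    have hd1 : d = 1 := Subtype.ext (Equiv.ext fun u => hid u)
    have : (g1 : ↥(autGroup E)) = (g2 : ↥(autGroup E)) := by
      have := inv_mul_eq_one.mp (hd ▸ hd1)
      exact this.symm
    exact Subtype.ext this
  · rintro ⟨F, hFarc, hF0⟩
    obtain ⟨b, hb⟩ := karc_exists hk hf0 hFarc
    have hbv : ((b : ↥(autGroup E)) : Equiv.Perm V) v = v := by
      conv_lhs => rw [← hf00]
      rw [hb 0, hF0]
    exact ⟨⟨b, hbv⟩, Subtype.ext (funext hb)⟩

lemma regular_on_karcs (hconn : DConnected E)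
    (hout : ∀ v : V, (outSet E v).ncard = 2) (hin : ∀ v : V, (inSet E v).ncard = 2)
    {k : ℕ} (hk : KArcTransitive E k) (hk1 : ¬ KArcTransitive E (k+1)) :
    ∀ f g : Fin (k + 1) → V, IsKArc E k f → IsKArc E k g →
      ∃! a : ↥(autGroup E), ∀ i, ((a : ↥(autGroup E)) : Equiv.Perm V) (f i) = g i := by
  intro f g hf hg
  obtain ⟨a, ha⟩ := karc_exists hk hf hg
  refine ⟨a, ha, ?_⟩
  intro b hb
  set d : ↥(autGroup E) := a⁻¹ * b with hd
  have hfixd : ∀ i, (d : Equiv.Perm V) (f i) = f i := by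
    intro i
    rw [hd]
    simp only [Subgroup.coe_mul, Subgroup.coe_inv, Equiv.Perm.mul_apply]
    rw [hb i, ← ha i, Equiv.Perm.inv_apply_self]
  have hid := rigid hconn hout hin hk hk1 d hf hfixd
  have hd1 : d = 1 := Subtype.ext (Equiv.ext fun u => hid u)
  have := inv_mul_eq_one.mp (hd ▸ hd1)
  exact this.symm


end ValencyTwoAux


/-- Let `Γ` be a connected vertex-transitive digraph with in- and
out-valencies equal to `2`.  If `Γ` is not highly-arc-transitive then there is a `k` such
that `Aut(Γ)` acts regularly on `k`-arcs and every vertex stabilizer has order `2^k`.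
In particular, if vertex stabilizers are infinite then `Γ` is highly-arc-transitive. -/
theorem valency_two_regular_or_highly_arc_transitive
    {V : Type*} (E : V → V → Prop)
    (hconn : DConnected E) (hvt : VertexTransitive E)
    (hout : ∀ v : V, (outSet E v).ncard = 2)
    (hin : ∀ v : V, (inSet E v).ncard = 2) :
    (¬ HighlyArcTransitive E →
      ∃ k : ℕ, (∀ f g : Fin (k + 1) → V, IsKArc E k f → IsKArc E k g →
          ∃! a : ↥(autGroup E), ∀ i, (a : Equiv.Perm V) (f i) = g i) ∧
        ∀ v : V, Nat.card ↥(vStab E v) = 2 ^ k) ∧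
    ((∃ v : V, Infinite ↥(vStab E v)) → HighlyArcTransitive E) := by
  have main : ¬ HighlyArcTransitive E →
      ∃ k : ℕ, (∀ f g : Fin (k + 1) → V, IsKArc E k f → IsKArc E k g →
          ∃! a : ↥(autGroup E), ∀ i, (a : Equiv.Perm V) (f i) = g i) ∧
        ∀ v : V, Nat.card ↥(vStab E v) = 2 ^ k := by
    classical
    intro hnot
    have hex : ∃ m, ¬ KArcTransitive E m := not_forall.mp hnot
    have hm0 : Nat.find hex ≠ 0 := by
      intro h
      exact (h ▸ Nat.find_spec hex) (ValencyTwoAux.karc_zero hvt)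
    obtain ⟨k, hmk⟩ : ∃ k, Nat.find hex = k + 1 := ⟨Nat.find hex - 1, by omega⟩
    have hk1 : ¬ KArcTransitive E (k+1) := hmk ▸ Nat.find_spec hex
    have hk : KArcTransitive E k := by
      by_contra hc
      have := Nat.find_le (h := hex) hc
      omega
    refine ⟨k, ValencyTwoAux.regular_on_karcs hconn hout hin hk hk1, fun v => ?_⟩
    rw [ValencyTwoAux.stab_card_eq hconn hout hin hk hk1 v,
      ValencyTwoAux.card_arcsFrom hout k v]
  refine ⟨main, ?_⟩
  rintro ⟨v, hinf⟩
  by_contra hnot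
  obtain ⟨k, -, hcard⟩ := main hnot
  have h0 : Nat.card ↥(vStab E v) = 0 := Nat.card_eq_zero_of_infinite
  rw [hcard v] at h0
  exact pow_ne_zero k two_ne_zero h0
end
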